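/- Fix $\alpha \in (0, 4]$, $e, f > 0$. For $y > 0$ sufficiently large (so that $x \mapsto x^{\alpha-1}(x^{\alpha}/2+f)^{-(e+1/\alpha+1)}$ is decreasing on $[y/2, \infty)$) and for $0 \le t \le y/2$, the function $S(t) = ((y-t)^{\alpha}/2 + f)^{-e-1/\alpha} - ((y+t)^{\alpha}/2 + f)^{-e-1/\alpha}$ satisfies $S(t) \le 4\alpha(e + 1/\alpha)\,((y/2)^{\alpha}/2 + f)^{-e-1/\alpha}\, \frac{t}{y}$. -/

import Mathlib

open Real Set

theorem S_upper_bound (α e f y t : ℝ) (hα : 0 < α) (hα4 : α ≤ 4) (he : 0 < e) (hf : 0 < f)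
    (hy : 0 < y)
    (hmono : AntitoneOn (fun x : ℝ => x ^ (α - 1) * (x ^ α / 2 + f) ^ (-(e + 1/α + 1)))
      (Set.Ici (y/2)))
    (ht0 : 0 ≤ t) (ht : t ≤ y/2) :
    ((y - t) ^ α / 2 + f) ^ (-e - 1/α) - ((y + t) ^ α / 2 + f) ^ (-e - 1/α)
      ≤ 4 * α * (e + 1/α) * ((y/2) ^ α / 2 + f) ^ (-e - 1/α) * (t/y) := by
  have hainv : 0 < 1/α := by positivity
  have hq : 0 < e + 1/α := by linarith
  rcases eq_or_lt_of_le ht0 with h0 | h0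
  · subst h0
    simp
  -- main case t > 0
  set p : ℝ := -e - 1/α with hp
  set g : ℝ → ℝ := fun x => (x ^ α / 2 + f) ^ p with hg
  set g' : ℝ → ℝ := fun x => (α * x ^ (α - 1) / 2) * p * (x ^ α / 2 + f) ^ (p - 1) with hg'
  have hy2 : 0 < y / 2 := by linarith
  have hab : y - t < y + t := by linarith
  have hderiv : ∀ x ∈ Set.Icc (y - t) (y + t), HasDerivAt g (g' x) x := by
    intro x hx
    have hxpos : 0 < x := by
      have := hx.1; linarith
    have hupos : 0 < x ^ α / 2 + f := by positivity
    have h1 : HasDerivAt (fun x : ℝ => x ^ α / 2 + f) (α * x ^ (α - 1) / 2) x :=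
      ((Real.hasDerivAt_rpow_const (Or.inl hxpos.ne')).div_const 2).add_const f
    exact h1.rpow_const (Or.inl hupos.ne')
  have hcont : ContinuousOn g (Set.Icc (y - t) (y + t)) := fun x hx =>
    (hderiv x hx).continuousAt.continuousWithinAt
  obtain ⟨c, hc, hceq⟩ := exists_hasDerivAt_eq_slope g g' hab hcont
    (fun x hx => hderiv x (Set.mem_Icc.2 ⟨hx.1.le, hx.2.le⟩))
  have hc1 : y / 2 ≤ c := by have := hc.1; linarith
  have hcpos : 0 < c := lt_of_lt_of_le hy2 hc1
  have hcu : 0 < c ^ α / 2 + f := by positivity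
  have hA : 0 < (y/2) ^ α / 2 + f := by positivity
  -- S = -g'(c) * (2t)
  have hS : g (y - t) - g (y + t) = -g' c * (2 * t) := by
    have h2t : y + t - (y - t) = 2 * t := by ring
    have h2tne : (2 * t) ≠ 0 := by positivity
    have := hceq
    rw [h2t, eq_div_iff h2tne] at this
    linarith [this]
  have hpm : p - 1 = -(e + 1/α + 1) := by rw [hp]; ring
  -- bound -g'(c)
  have hmb : c ^ (α - 1) * (c ^ α / 2 + f) ^ (-(e + 1/α + 1))
      ≤ (y/2) ^ (α - 1) * ((y/2) ^ α / 2 + f) ^ (-(e + 1/α + 1)) :=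
    hmono (Set.mem_Ici.2 le_rfl) (Set.mem_Ici.2 hc1) hc1
  have hgc : -g' c = (α / 2) * (e + 1/α) * (c ^ (α - 1) * (c ^ α / 2 + f) ^ (-(e + 1/α + 1))) := by
    rw [hg']
    simp only [hpm, hp]
    ring
  have hstep1 : g (y - t) - g (y + t)
      ≤ (α / 2) * (e + 1/α) * ((y/2) ^ (α - 1) * ((y/2) ^ α / 2 + f) ^ (-(e + 1/α + 1))) * (2 * t) := by
    rw [hS, hgc]
    have h2t : (0:ℝ) ≤ 2 * t := by linarith
    have hcoef : 0 ≤ (α / 2) * (e + 1/α) := by positivity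
    nlinarith [mul_le_mul_of_nonneg_left hmb hcoef]
  -- arithmetic: rewrite the powers
  have hB : (y/2) ^ (α - 1) = (y/2) ^ α * (y/2)⁻¹ := by
    rw [Real.rpow_sub hy2, Real.rpow_one, div_eq_mul_inv]
  have hC : ((y/2) ^ α / 2 + f) ^ (-(e + 1/α + 1))
      = ((y/2) ^ α / 2 + f) ^ (-e - 1/α) * ((y/2) ^ α / 2 + f)⁻¹ := by
    have : -(e + 1/α + 1) = (-e - 1/α) + (-1) := by ring
    rw [this, Real.rpow_add hA, Real.rpow_neg_one]
  refine le_trans hstep1 ?_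
  rw [hB, hC]
  set P := (y/2) ^ α with hPdef
  have hP : 0 < P := Real.rpow_pos_of_pos hy2 α
  set Aq := ((y/2) ^ α / 2 + f) ^ (-e - 1/α) with hAq
  have hAqpos : 0 < Aq := Real.rpow_pos_of_pos hA _
  -- goal: (α/2)*(e+1/α)*(P*(y/2)⁻¹*(Aq*(P/2+f)⁻¹))*(2t) ≤ 4α(e+1/α)*Aq*(t/y)
  have hX : P * (y/2)⁻¹ * (Aq * (P/2+f)⁻¹) = (P / (P/2+f)) * Aq * (2/y) := by
    field_simp
  have hPd : P / (P/2+f) ≤ 2 := by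
    rw [div_le_iff₀ (by positivity)]
    linarith
  have hkey : P * (y/2)⁻¹ * (Aq * (P/2+f)⁻¹) ≤ 4 * Aq / y := by
    rw [hX]
    have : (P / (P/2+f)) * Aq * (2/y) ≤ 2 * Aq * (2/y) := by
      have h2y : (0:ℝ) ≤ 2/y := by positivity
      have := mul_le_mul_of_nonneg_right (mul_le_mul_of_nonneg_right hPd hAqpos.le) h2y
      linarith
    have h4 : 2 * Aq * (2/y) = 4 * Aq / y := by ring
    linarith [this]
  have hc2 : (0:ℝ) ≤ α * (e + 1/α) * t := by positivity
  calc α / 2 * (e + 1/α) * (P * (y/2)⁻¹ * (Aq * (P/2+f)⁻¹)) * (2 * t)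
      = (α * (e + 1/α) * t) * (P * (y/2)⁻¹ * (Aq * (P/2+f)⁻¹)) := by ring
    _ ≤ (α * (e + 1/α) * t) * (4 * Aq / y) := mul_le_mul_of_nonneg_left hkey hc2
    _ = 4 * α * (e + 1/α) * Aq * (t/y) := by ring
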